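/- Let Z ~ N(0,1) and W_μ ~ N(μ,1) be independent, and let Λ_μ = Z² + (1/2)(1 − sgn(W_μ))·W_μ². As μ → ∞, Λ_μ converges in distribution to the chi-squared distribution with 1 degree of freedom. -/

import Mathlib

open MeasureTheory ProbabilityTheory Real Filter
open scoped ENNReal NNReal

/-- The chi-squared distribution with `k` degrees of freedom. -/
noncomputable def chiSq (k : ℝ) : Measure ℝ := gammaMeasure (k / 2) (1 / 2)

lemma aux_measurable_sign : Measurable Real.sign := by
  unfold Real.sign
  exact Measurable.ite (measurableSet_lt measurable_id measurable_const) measurable_const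
    (Measurable.ite (measurableSet_lt measurable_const measurable_id) measurable_const
      measurable_const)

lemma aux_integral_withDensity_ofReal {g : ℝ → ℝ} (hg : Measurable g) (hg0 : ∀ x, 0 ≤ g x)
    (f : ℝ → ℝ) :
    ∫ x, f x ∂(volume.withDensity fun x => ENNReal.ofReal (g x)) = ∫ x, g x * f x := by
  have h : (fun x => ENNReal.ofReal (g x)) = fun x => ((g x).toNNReal : ℝ≥0∞) := rfl
  rw [h, integral_withDensity_eq_integral_smul hg.real_toNNReal]
  congr 1
  funext x
  simp [NNReal.smul_def, Real.coe_toNNReal _ (hg0 x)]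

lemma aux_const_eq : ((1:ℝ)/2) ^ ((1:ℝ)/2) / Real.Gamma (1/2)
    = (Real.sqrt (2 * Real.pi))⁻¹ := by
  rw [show ((1:ℝ)/2) ^ ((1:ℝ)/2) = Real.sqrt ((1:ℝ)/2) from (Real.sqrt_eq_rpow _).symm,
    Real.Gamma_one_half_eq, show (1:ℝ)/2 = 2⁻¹ by norm_num, Real.sqrt_inv,
    Real.sqrt_mul (by norm_num : (0:ℝ) ≤ 2), mul_inv, div_eq_mul_inv]

/-- Key change of variables: the pushforward of the standard gaussian under squaring is χ²₁. -/
lemma aux_integral_sq_gauss (f : ℝ → ℝ) :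
    ∫ x, f (x ^ 2) ∂(gaussianReal 0 1) = ∫ x, f x ∂(chiSq 1) := by
  have hgauss : ∫ x, f (x ^ 2) ∂(gaussianReal 0 1)
      = ∫ x, gaussianPDFReal 0 1 x * f (x ^ 2) := by
    rw [gaussianReal_of_var_ne_zero _ one_ne_zero]
    exact aux_integral_withDensity_ofReal (measurable_gaussianPDFReal 0 1)
      (gaussianPDFReal_nonneg 0 1) _
  have hchi : ∫ x, f x ∂(chiSq 1)
      = ∫ x, gammaPDFReal (1/2) (1/2) x * f x := by
    show ∫ x, f x ∂(gammaMeasure (1/2) (1/2)) = _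
    rw [gammaMeasure]
    exact aux_integral_withDensity_ofReal (measurable_gammaPDFReal _ _)
      (gammaPDFReal_nonneg (by norm_num) (by norm_num)) _
  rw [hgauss, hchi]
  set G : ℝ → ℝ := fun x => gaussianPDFReal 0 1 x * f (x ^ 2) with hG
  have heven : (fun x => gaussianPDFReal 0 1 x * f (x ^ 2)) = fun x => G |x| := by
    funext x
    simp only [hG, gaussianPDFReal, sub_zero, sq_abs]
  calc ∫ x, gaussianPDFReal 0 1 x * f (x ^ 2)
      = ∫ x, G |x| := by rw [heven]
    _ = 2 * ∫ x in Set.Ioi (0:ℝ), G x := integral_comp_abs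
    _ = 2 * ∫ x in Set.Ioi (0:ℝ), (|(1:ℝ)/2| * x ^ ((1:ℝ)/2 - 1)) • G (x ^ ((1:ℝ)/2)) := by
        rw [integral_comp_rpow_Ioi G (by norm_num : (1:ℝ)/2 ≠ 0)]
    _ = ∫ x in Set.Ioi (0:ℝ), 2 * ((|(1:ℝ)/2| * x ^ ((1:ℝ)/2 - 1)) • G (x ^ ((1:ℝ)/2))) :=
        (integral_const_mul 2 _).symm
    _ = ∫ x in Set.Ioi (0:ℝ), gammaPDFReal (1/2) (1/2) x * f x := by
        refine setIntegral_congr_fun measurableSet_Ioi (fun x hx => ?_)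
        have hx0 : (0:ℝ) < x := hx
        have hsq : (x ^ ((1:ℝ)/2)) ^ (2:ℕ) = x := by
          rw [← Real.rpow_natCast (x ^ ((1:ℝ)/2)) 2, ← Real.rpow_mul hx0.le]
          norm_num
        have hpdf : gaussianPDFReal 0 1 (x ^ ((1:ℝ)/2))
            = (Real.sqrt (2 * Real.pi))⁻¹ * Real.exp (-(x / 2)) := by
          simp only [gaussianPDFReal, NNReal.coe_one, mul_one, sub_zero]
          rw [hsq, neg_div]
        simp only [hG, hsq, hpdf, smul_eq_mul]
        rw [gammaPDFReal, if_pos hx0.le, aux_const_eq]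
        rw [abs_of_pos (by norm_num : (0:ℝ) < 1/2)]
        rw [show -((1:ℝ)/2 * x) = -(x/2) by ring]
        ring
    _ = ∫ x, gammaPDFReal (1/2) (1/2) x * f x := by
        refine setIntegral_eq_integral_of_forall_compl_eq_zero (fun x hx => ?_)
        have hx0 : x ≤ 0 := by simpa using hx
        rcases lt_or_eq_of_le hx0 with h | h
        · rw [gammaPDFReal, if_neg (not_le.mpr h), zero_mul]
        · subst h
          rw [gammaPDFReal, if_pos le_rfl, Real.zero_rpow (by norm_num : (1:ℝ)/2 - 1 ≠ 0)]
          ring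

/-- As `μ → ∞`, `Λ_μ = Z² + (1/2)(1 − sgn W_μ) W_μ²` converges in distribution to `χ²₁`:
integrals of every bounded continuous function converge. -/
theorem stmt_7 {Ω : Type*} [MeasureSpace Ω] [IsProbabilityMeasure (ℙ : Measure Ω)]
    (Z : Ω → ℝ) (W : ℝ → Ω → ℝ)
    (hZ : Measure.map Z ℙ = gaussianReal 0 1)
    (hW : ∀ μ : ℝ, Measure.map (W μ) ℙ = gaussianReal μ 1)
    (hZW : ∀ μ : ℝ, IndepFun Z (W μ) ℙ) :
    ∀ f : BoundedContinuousFunction ℝ ℝ,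
      Tendsto (fun μ : ℝ =>
          ∫ ω, f (Z ω ^ 2 + (1 / 2) * (1 - Real.sign (W μ ω)) * (W μ ω) ^ 2) ∂ℙ)
        atTop (nhds (∫ x, f x ∂(chiSq 1))) := by
  intro f
  -- Z and W μ are a.e.-measurable
  have hZae : AEMeasurable Z ℙ := by
    by_contra h
    rw [Measure.map_of_not_aemeasurable h] at hZ
    exact (IsProbabilityMeasure.ne_zero (gaussianReal 0 1)) hZ.symm
  have hWae : ∀ μ : ℝ, AEMeasurable (W μ) ℙ := by
    intro μ
    by_contra h
    have h2 := hW μ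
    rw [Measure.map_of_not_aemeasurable h] at h2
    exact (IsProbabilityMeasure.ne_zero (gaussianReal μ 1)) h2.symm
  set Z' : Ω → ℝ := hZae.mk Z with hZ'def
  have hZ'm : Measurable Z' := hZae.measurable_mk
  have hZ'ae : Z =ᵐ[ℙ] Z' := hZae.ae_eq_mk
  -- the limit value equals ∫ f (Z ω ^ 2)
  have hI : ∫ ω, f (Z' ω ^ 2) ∂ℙ = ∫ x, f x ∂(chiSq 1) := by
    rw [← aux_integral_sq_gauss f, ← hZ, Measure.map_congr hZ'ae]
    exact (integral_map hZ'm.aemeasurable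
      ((f.continuous.comp (continuous_pow 2) :
        Continuous fun x : ℝ => f (x ^ 2)).aestronglyMeasurable)).symm
  -- uniform bound for each μ
  have hbound : ∀ μ : ℝ,
      |(∫ ω, f (Z ω ^ 2 + (1 / 2) * (1 - Real.sign (W μ ω)) * (W μ ω) ^ 2) ∂ℙ)
        - ∫ x, f x ∂(chiSq 1)|
        ≤ 2 * ‖f‖ * cdf (gaussianReal 0 1) (-μ) := by
    intro μ
    set W' : Ω → ℝ := (hWae μ).mk (W μ) with hW'def
    have hW'm : Measurable W' := (hWae μ).measurable_mk
    have hW'ae : W μ =ᵐ[ℙ] W' := (hWae μ).ae_eq_mk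
    have hcong : ∫ ω, f (Z ω ^ 2 + (1 / 2) * (1 - Real.sign (W μ ω)) * (W μ ω) ^ 2) ∂ℙ
        = ∫ ω, f (Z' ω ^ 2 + (1 / 2) * (1 - Real.sign (W' ω)) * (W' ω) ^ 2) ∂ℙ := by
      refine integral_congr_ae ?_
      filter_upwards [hZ'ae, hW'ae] with ω h1 h2
      rw [h1, h2]
    -- measurable inner functions
    have hmeas1 : AEStronglyMeasurable
        (fun ω => f (Z' ω ^ 2 + (1 / 2) * (1 - Real.sign (W' ω)) * (W' ω) ^ 2)) ℙ := by
      apply f.continuous.comp_aestronglyMeasurable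
      apply Measurable.aestronglyMeasurable
      exact ((hZ'm.pow_const 2).add
        (((measurable_const.sub (aux_measurable_sign.comp hW'm)).const_mul _).mul
          (hW'm.pow_const 2)))
    have hmeas2 : AEStronglyMeasurable (fun ω => f (Z' ω ^ 2)) ℙ :=
      f.continuous.comp_aestronglyMeasurable (hZ'm.pow_const 2).aestronglyMeasurable
    have hint1 : Integrable
        (fun ω => f (Z' ω ^ 2 + (1 / 2) * (1 - Real.sign (W' ω)) * (W' ω) ^ 2)) ℙ :=
      Integrable.mono' (integrable_const ‖f‖) hmeas1
        (ae_of_all _ fun ω => f.norm_coe_le_norm _)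
    have hint2 : Integrable (fun ω => f (Z' ω ^ 2)) ℙ :=
      Integrable.mono' (integrable_const ‖f‖) hmeas2
        (ae_of_all _ fun ω => f.norm_coe_le_norm _)
    set s : Set Ω := W' ⁻¹' (Set.Iio 0) with hsdef
    have hs : MeasurableSet s := hW'm measurableSet_Iio
    -- the pointwise estimate
    have hpt : ∀ ω, |f (Z' ω ^ 2 + (1 / 2) * (1 - Real.sign (W' ω)) * (W' ω) ^ 2)
        - f (Z' ω ^ 2)| ≤ s.indicator (fun _ => 2 * ‖f‖) ω := by
      intro ω
      by_cases hω : W' ω < 0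
      · rw [Set.indicator_of_mem (show ω ∈ s from hω) (fun _ => 2 * ‖f‖)]
        refine (abs_sub _ _).trans ?_
        have h1 := f.norm_coe_le_norm (Z' ω ^ 2 + 1 / 2 * (1 - Real.sign (W' ω)) * W' ω ^ 2)
        have h2 := f.norm_coe_le_norm (Z' ω ^ 2)
        rw [Real.norm_eq_abs] at h1 h2
        rw [two_mul]
        exact add_le_add h1 h2
      · rw [Set.indicator_of_notMem (show ω ∉ s from hω) (fun _ => 2 * ‖f‖)]
        push_neg at hω
        rcases lt_or_eq_of_le hω with h | h
        · rw [Real.sign_of_pos h]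
          norm_num
        · rw [← h, Real.sign_zero]
          norm_num
    -- combine
    rw [hcong, ← hI, ← integral_sub hint1 hint2]
    have h1 : |∫ ω, (f (Z' ω ^ 2 + (1 / 2) * (1 - Real.sign (W' ω)) * (W' ω) ^ 2)
        - f (Z' ω ^ 2)) ∂ℙ| ≤ 2 * ‖f‖ * (ℙ s).toReal := by
      calc |∫ ω, (f (Z' ω ^ 2 + (1 / 2) * (1 - Real.sign (W' ω)) * (W' ω) ^ 2)
            - f (Z' ω ^ 2)) ∂ℙ|
          ≤ ∫ ω, |f (Z' ω ^ 2 + (1 / 2) * (1 - Real.sign (W' ω)) * (W' ω) ^ 2)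
            - f (Z' ω ^ 2)| ∂ℙ := by
            have := norm_integral_le_integral_norm
              (fun ω => f (Z' ω ^ 2 + (1 / 2) * (1 - Real.sign (W' ω)) * (W' ω) ^ 2)
                - f (Z' ω ^ 2)) (μ := ℙ)
            simpa [Real.norm_eq_abs] using this
        _ ≤ ∫ ω, s.indicator (fun _ => 2 * ‖f‖) ω ∂ℙ := by
            refine integral_mono (hint1.sub hint2).abs
              ((integrable_const _).indicator hs) hpt
        _ = 2 * ‖f‖ * (ℙ s).toReal := by
            rw [integral_indicator_const _ hs, smul_eq_mul, measureReal_def]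
            ring
    refine h1.trans ?_
    have hmono : (ℙ s).toReal ≤ cdf (gaussianReal 0 1) (-μ) := by
      have hmap : ℙ s = (gaussianReal μ 1) (Set.Iio 0) := by
        rw [hsdef, ← Measure.map_apply hW'm measurableSet_Iio,
          ← Measure.map_congr hW'ae, hW μ]
      have hshift : (gaussianReal μ 1) (Set.Iic 0) = (gaussianReal 0 1) (Set.Iic (-μ)) := by
        have := gaussianReal_map_add_const (μ := 0) (v := 1) μ
        rw [zero_add] at this
        rw [← this, Measure.map_apply (measurable_add_const μ) measurableSet_Iic]
        congr 1
        ext x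
        simp [Set.mem_preimage, add_comm]
      rw [cdf_eq_real, measureReal_def, ← hshift, hmap]
      exact ENNReal.toReal_mono (measure_ne_top _ _)
        (measure_mono Set.Iio_subset_Iic_self)
    exact mul_le_mul_of_nonneg_left hmono (by positivity)
  -- squeeze
  rw [tendsto_iff_dist_tendsto_zero]
  simp only [Real.dist_eq]
  refine squeeze_zero (fun μ => abs_nonneg _) hbound ?_
  have : Tendsto (fun μ : ℝ => cdf (gaussianReal 0 1) (-μ)) atTop (nhds 0) :=
    (tendsto_cdf_atBot _).comp tendsto_neg_atTop_atBot
  simpa using this.const_mul (2 * ‖f‖)
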